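/- arXiv:1010.1923 — 2 statements merged into one kernel-verified Lean document; each statement's English description precedes it below -/
import Mathlib

section
/- Any point at which l1 = l1' = l2 l2' - l3 l3' = 0 lies on the Cayley–Rohn quartic F = 0 and is a singular point of it (all four partial derivatives of F vanish there). -/
open MvPolynomial

/-- The Cayley–Rohn quartic expression. -/
def cayleyF {R : Type*} [CommRing R] (l1 l2 l3 m1 m2 m3 : R) : R :=
  l1 ^ 2 * m1 ^ 2 + l2 ^ 2 * m2 ^ 2 + l3 ^ 2 * m3 ^ 2
    - 2 * l1 * l2 * m1 * m2 - 2 * l1 * l3 * m1 * m3 - 2 * l2 * l3 * m2 * m3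

/-- A point where `l1 = l1' = l2 l2' - l3 l3' = 0` is a singular point of the
Cayley–Rohn quartic. -/
theorem cayley_rohn_singular_second_type
    (l1 l2 l3 m1 m2 m3 : MvPolynomial (Fin 4) ℂ)
    (hl1 : l1.IsHomogeneous 1) (hl2 : l2.IsHomogeneous 1) (hl3 : l3.IsHomogeneous 1)
    (hm1 : m1.IsHomogeneous 1) (hm2 : m2.IsHomogeneous 1) (hm3 : m3.IsHomogeneous 1)
    (P : Fin 4 → ℂ) (hP : P ≠ 0)
    (h1 : eval P l1 = 0) (h2 : eval P m1 = 0)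
    (h3 : eval P (l2 * m2 - l3 * m3) = 0) :
    eval P (cayleyF l1 l2 l3 m1 m2 m3) = 0 ∧
      ∀ i : Fin 4, eval P (pderiv i (cayleyF l1 l2 l3 m1 m2 m3)) = 0 := by
  simp only [map_sub, map_mul] at h3
  constructor
  · simp only [cayleyF, map_sub, map_add, map_mul, map_pow, map_ofNat]
    rw [h1, h2]
    linear_combination (eval P l2 * eval P m2 - eval P l3 * eval P m3) * h3
  · intro i
    have hp2 : pderiv i (2 : MvPolynomial (Fin 4) ℂ) = 0 := by
      rw [← map_ofNat (C : ℂ →+* MvPolynomial (Fin 4) ℂ) 2, pderiv_C]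
    simp only [cayleyF, map_sub, map_add, map_mul, map_pow, map_ofNat, Derivation.leibniz,
      Derivation.leibniz_pow, smul_eq_mul, map_nsmul, nsmul_eq_mul, eval_ofNat, hp2, map_natCast, Nat.cast_ofNat, map_zero]
    rw [h1, h2]
    linear_combination (2 * (eval P (pderiv i l2) * eval P m2 + eval P l2 * eval P (pderiv i m2)
      - eval P (pderiv i l3) * eval P m3 - eval P l3 * eval P (pderiv i m3))) * h3
end

section
/- Let L be a line on a quartic surface V ⊂ P^3 and E a trope of V (a plane such that the quartic form restricts to the square of a conic form on E) with L not contained in E. If p ∈ L ∩ E is a smooth point of V, then the tangent plane of V at p equals E; consequently, since L ⊂ V forces L to lie in the tangent plane of V at every smooth point of V on L, we get L ⊂ E, a contradiction. Hence L meets E only in singular points of V. -/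
open MvPolynomial

private lemma single_of_degree_one (v : Fin 4 →₀ ℕ) (h : ∑ i ∈ v.support, v i = 1) :
    ∃ j, v = Finsupp.single j 1 := by
  obtain ⟨j, hj⟩ : v.support.Nonempty := by
    by_contra h'
    rw [Finset.not_nonempty_iff_eq_empty.mp h', Finset.sum_empty] at h
    exact one_ne_zero h.symm
  refine ⟨j, ?_⟩
  have hj1 : 1 ≤ v j := Nat.one_le_iff_ne_zero.2 (Finsupp.mem_support_iff.1 hj)
  have hle : v j ≤ 1 := h ▸ Finset.single_le_sum (fun i _ => Nat.zero_le _) hj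
  have hvj : v j = 1 := le_antisymm hle hj1
  ext i
  rcases eq_or_ne i j with rfl | hij
  · simp [hvj]
  · rw [Finsupp.single_apply, if_neg (Ne.symm hij)]
    by_contra hne
    have hi : i ∈ v.support := Finsupp.mem_support_iff.2 hne
    have hsub : ({i, j} : Finset (Fin 4)) ⊆ v.support := by
      intro x hx
      simp only [Finset.mem_insert, Finset.mem_singleton] at hx
      rcases hx with rfl | rfl <;> assumption
    have h2 : v i + v j ≤ 1 := by
      calc v i + v j = ∑ x ∈ ({i, j} : Finset (Fin 4)), v x := (Finset.sum_pair hij).symm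
      _ ≤ ∑ x ∈ v.support, v x := Finset.sum_le_sum_of_subset hsub
      _ = 1 := h
    omega

private lemma eval_affine (ℓ : MvPolynomial (Fin 4) ℂ) (hℓ : ℓ.IsHomogeneous 1)
    (x y : Fin 4 → ℂ) (u : ℂ) :
    eval (x + u • y) ℓ = eval x ℓ + u * eval y ℓ := by
  conv_lhs => rw [ℓ.as_sum]
  conv_rhs => rw [ℓ.as_sum]
  rw [map_sum, map_sum, map_sum, Finset.mul_sum, ← Finset.sum_add_distrib]
  refine Finset.sum_congr rfl fun v hv => ?_
  obtain ⟨j, rfl⟩ := single_of_degree_one v (by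
    have h1 := hℓ (mem_support_iff.1 hv)
    rw [← Finsupp.degree_apply, Finsupp.degree_eq_weight_one]
    exact h1)
  simp only [eval_monomial, Finsupp.prod_single_index, pow_zero, pow_one, Pi.add_apply,
    Pi.smul_apply, smul_eq_mul]
  ring

/-- A line on a quartic surface which is not contained in a trope meets that trope
only in singular points of the surface. -/
theorem line_meets_trope_in_singular_points
    (F ℓ q g : MvPolynomial (Fin 4) ℂ)
    (hF : F.IsHomogeneous 4) (hℓ : ℓ.IsHomogeneous 1) (hq : q.IsHomogeneous 2)
    (htrope : F = q ^ 2 + ℓ * g)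
    (A B : Fin 4 → ℂ) (hAB : LinearIndependent ℂ ![A, B])
    (hLV : ∀ s t : ℂ, eval (s • A + t • B) F = 0)
    (hLE : ∃ s t : ℂ, eval (s • A + t • B) ℓ ≠ 0) :
    ∀ s t : ℂ, ¬(s = 0 ∧ t = 0) → eval (s • A + t • B) ℓ = 0 →
      ∀ i : Fin 4, eval (s • A + t • B) (pderiv i F) = 0 := by
  intro s t hst hℓp i
  obtain ⟨s₁, t₁, he⟩ := hLE
  set p : Fin 4 → ℂ := s • A + t • B with hp
  set e : Fin 4 → ℂ := s₁ • A + t₁ • B with hedef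
  set Φ : Fin 4 → Polynomial ℂ := fun j => Polynomial.C (p j) + Polynomial.X * Polynomial.C (e j)
    with hΦ
  -- evaluation of the substituted polynomial
  have hψeval : ∀ (h : MvPolynomial (Fin 4) ℂ) (u : ℂ),
      Polynomial.eval u (aeval Φ h) = eval (p + u • e) h := by
    intro h u
    rw [← Polynomial.coe_aeval_eq_eval]
    rw [show (Polynomial.aeval u) ((aeval Φ) h)
        = ((Polynomial.aeval u).comp (aeval Φ)) h from rfl]
    rw [MvPolynomial.comp_aeval]
    have hfun : (fun j => Polynomial.aeval u (Φ j)) = (p + u • e) := by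
      funext j
      simp only [hΦ, map_add, map_mul, Polynomial.aeval_X, Polynomial.aeval_C,
        Algebra.algebraMap_self, RingHom.id_apply, Pi.add_apply, Pi.smul_apply, smul_eq_mul]
    rw [hfun]
    exact DFunLike.congr_fun (coe_aeval_eq_eval _) h
  have hline : ∀ u : ℂ, p + u • e = (s + u * s₁) • A + (t + u * t₁) • B := by
    intro u
    funext j
    simp only [hp, hedef, Pi.add_apply, Pi.smul_apply, smul_eq_mul]
    ring
  -- F vanishes on the line through p in direction e
  have hψF : aeval Φ F = 0 := by
    apply Polynomial.funext
    intro u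
    rw [hψeval, hline u, hLV, Polynomial.eval_zero]
  -- image of ℓ
  have hψℓ : aeval Φ ℓ = Polynomial.X * Polynomial.C (eval e ℓ) := by
    apply Polynomial.funext
    intro u
    rw [hψeval, eval_affine ℓ hℓ, hℓp]
    rw [Polynomial.eval_mul, Polynomial.eval_X, Polynomial.eval_C, zero_add]
  -- q vanishes at p
  have hq0 : eval p q = 0 := by
    have h0 := hLV s t
    rw [← hp, htrope] at h0
    simp only [map_add, map_mul, map_pow, hℓp, zero_mul, add_zero] at h0
    exact pow_eq_zero_iff (two_ne_zero) |>.mp h0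
  -- the key divisibility
  have key : (aeval Φ q) ^ 2 = -(Polynomial.X * (Polynomial.C (eval e ℓ) * aeval Φ g)) := by
    have h0 := hψF
    rw [htrope, map_add, map_mul, map_pow, hψℓ] at h0
    linear_combination h0
  have hXq : Polynomial.X ∣ aeval Φ q := by
    rw [Polynomial.X_dvd_iff, Polynomial.coeff_zero_eq_eval_zero, hψeval]
    simpa using hq0
  obtain ⟨r, hr⟩ := hXq
  have hXg : Polynomial.C (eval e ℓ) * aeval Φ g = Polynomial.X * -(r ^ 2) := by
    have h2 : Polynomial.X * (Polynomial.C (eval e ℓ) * aeval Φ g)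
        = Polynomial.X * (Polynomial.X * -(r ^ 2)) := by
      rw [hr] at key
      linear_combination key
    exact mul_left_cancel₀ Polynomial.X_ne_zero h2
  have hg0 : eval e ℓ * eval p g = 0 := by
    have := congrArg (Polynomial.eval 0) hXg
    simpa [hψeval] using this
  have hgp : eval p g = 0 := (mul_eq_zero.mp hg0).resolve_left he
  -- conclude
  rw [htrope]
  simp only [map_add, pderiv_mul, pderiv_pow, map_mul, map_pow, map_ofNat, Nat.cast_ofNat,
    hq0, hgp, hℓp, mul_zero, zero_mul, add_zero, zero_add]
  ring
end
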